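/- Let n be a positive integer, σ > 0 and δ > 0 be real numbers with 12·n·σ ≤ δ. Let (Ω, P) be a probability space carrying a jointly independent family of real random variables: for each i < n a variable GS̄_i with law N(∑_{j<n} G_{ij}, σ²), and for each pair i, j < n a variable Ḡ_{ij} with law N(G_{ij}, σ²), where G : Fin n × Fin n → ℝ is a fixed matrix of target conductances. Let A : Fin n → ℝ be inputs with 0 ≤ A_i ≤ 1 for all i. Define D̄S = ∑_{i<n} A_i · GS̄_i and D̄ = ∑_{j<n} ∑_{i<n} A_i · Ḡ_{ij}. Then P(|D̄ − D̄S| ≤ δ) ≥ 1 − 4·10⁻⁹. -/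

import Mathlib

open MeasureTheory ProbabilityTheory
open scoped NNReal ENNReal

lemma fatpim_exp_mul_gaussianPDFReal (μ : ℝ) (v : ℝ≥0) (hv : v ≠ 0) (s x : ℝ) :
    Real.exp (s * x) * gaussianPDFReal μ v x
      = Real.exp (s * μ + v * s ^ 2 / 2) * gaussianPDFReal (μ + v * s) v x := by
  have hv' : (v : ℝ) ≠ 0 := by exact_mod_cast hv
  simp only [gaussianPDFReal]
  rw [mul_left_comm, mul_left_comm (Real.exp _), ← Real.exp_add, ← Real.exp_add]
  congr 2
  field_simp
  ring

lemma fatpim_integrable_exp_mul_gaussianReal (μ : ℝ) {v : ℝ≥0} (hv : v ≠ 0) (s : ℝ) :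
    Integrable (fun x => Real.exp (s * x)) (gaussianReal μ v) := by
  have hmf : Measurable fun x => (gaussianPDFReal μ v x).toNNReal :=
    (measurable_gaussianPDFReal μ v).real_toNNReal
  rw [gaussianReal_of_var_ne_zero _ hv]
  have hg : gaussianPDF μ v = fun x => (((gaussianPDFReal μ v x).toNNReal : ℝ≥0) : ℝ≥0∞) := rfl
  rw [hg, integrable_withDensity_iff_integrable_smul hmf]
  have : (fun x => (gaussianPDFReal μ v x).toNNReal • Real.exp (s * x))
      = fun x => Real.exp (s * μ + v * s ^ 2 / 2) * gaussianPDFReal (μ + v * s) v x := by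
    funext x
    rw [NNReal.smul_def, Real.coe_toNNReal _ (gaussianPDFReal_nonneg _ _ _), smul_eq_mul,
      mul_comm (gaussianPDFReal μ v x), fatpim_exp_mul_gaussianPDFReal μ v hv s x]
  rw [this]
  exact (integrable_gaussianPDFReal _ _).const_mul _

lemma fatpim_integral_exp_mul_gaussianReal (μ : ℝ) {v : ℝ≥0} (hv : v ≠ 0) (s : ℝ) :
    ∫ x, Real.exp (s * x) ∂(gaussianReal μ v) = Real.exp (s * μ + v * s ^ 2 / 2) := by
  have hmf : Measurable fun x => (gaussianPDFReal μ v x).toNNReal :=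
    (measurable_gaussianPDFReal μ v).real_toNNReal
  rw [gaussianReal_of_var_ne_zero _ hv]
  have hg : gaussianPDF μ v = fun x => (((gaussianPDFReal μ v x).toNNReal : ℝ≥0) : ℝ≥0∞) := rfl
  rw [hg, integral_withDensity_eq_integral_smul hmf]
  have : (fun x => (gaussianPDFReal μ v x).toNNReal • Real.exp (s * x))
      = fun x => Real.exp (s * μ + v * s ^ 2 / 2) * gaussianPDFReal (μ + v * s) v x := by
    funext x
    rw [NNReal.smul_def, Real.coe_toNNReal _ (gaussianPDFReal_nonneg _ _ _), smul_eq_mul,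
      mul_comm (gaussianPDFReal μ v x), fatpim_exp_mul_gaussianPDFReal μ v hv s x]
  rw [this, integral_const_mul, integral_gaussianPDFReal_eq_one _ hv, mul_one]

lemma fatpim_mgf_of_gaussian_law {Ω : Type*} [MeasurableSpace Ω] {P : Measure Ω}
    {X : Ω → ℝ} (hX : Measurable X) {μ : ℝ} {v : ℝ≥0} (hv : v ≠ 0)
    (hlaw : P.map X = gaussianReal μ v) (s : ℝ) :
    Integrable (fun ω => Real.exp (s * X ω)) P ∧
      mgf X P s = Real.exp (s * μ + v * s ^ 2 / 2) := by
  constructor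
  · have := fatpim_integrable_exp_mul_gaussianReal μ hv s
    rw [← hlaw] at this
    exact (integrable_map_measure (Measurable.aestronglyMeasurable (by fun_prop))
      hX.aemeasurable).mp this
  · have hsm : AEStronglyMeasurable (fun x => Real.exp (s * x)) (P.map X) :=
      ((measurable_id.const_mul s).exp).aestronglyMeasurable
    have h := integral_map hX.aemeasurable hsm
    rw [mgf, ← h, hlaw, fatpim_integral_exp_mul_gaussianReal μ hv s]

/-- The paper's Lemma 1 (FAT-PIM error-detection guarantee).  The jointly
independent family `X` carries the implemented `Sum` devices `X (.inl i) = GS̄ i`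
with law `N(∑ j, G (i, j), σ²)` and the implemented data cells
`X (.inr (i, j)) = Ḡ (i, j)` with law `N(G (i, j), σ²)`.  If `12 n σ ≤ δ` and the
inputs `A i` are normalized to `[0, 1]`, then the total column sum
`D̄ = ∑ j ∑ i, A i * Ḡ (i, j)` and the row-check sum `D̄S = ∑ i, A i * GS̄ i` agree
within the tolerance `δ` with probability at least `1 - 4·10⁻⁹`. -/
theorem fatpim_error_detection {Ω : Type*} [MeasurableSpace Ω]
    (P : Measure Ω) [IsProbabilityMeasure P]
    (n : ℕ) (hn : 0 < n) (σ : ℝ≥0) (hσ : 0 < σ) (δ : ℝ) (hδ : 0 < δ)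
    (hnσδ : 12 * n * (σ : ℝ) ≤ δ)
    (G : Fin n × Fin n → ℝ)
    (X : (Fin n ⊕ Fin n × Fin n) → Ω → ℝ) (hXmeas : ∀ k, Measurable (X k))
    (hindep : iIndepFun X P)
    (hlawGS : ∀ i : Fin n, P.map (X (.inl i)) = gaussianReal (∑ j, G (i, j)) (σ ^ 2))
    (hlawG : ∀ p : Fin n × Fin n, P.map (X (.inr p)) = gaussianReal (G p) (σ ^ 2))
    (A : Fin n → ℝ) (hA : ∀ i, 0 ≤ A i ∧ A i ≤ 1) :
    ENNReal.ofReal (1 - 4 / 10 ^ 9) ≤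
      P {ω | |(∑ j, ∑ i, A i * X (.inr (i, j)) ω) - ∑ i, A i * X (.inl i) ω| ≤ δ} := by
  classical
  set c : (Fin n ⊕ Fin n × Fin n) → ℝ := Sum.elim (fun i => -A i) (fun p => A p.1) with hc
  set m : (Fin n ⊕ Fin n × Fin n) → ℝ := Sum.elim (fun i => ∑ j, G (i, j)) G with hm
  set Zf : (Fin n ⊕ Fin n × Fin n) → Ω → ℝ := fun k ω => c k * X k ω with hZf
  have hv : (σ ^ 2 : ℝ≥0) ≠ 0 := pow_ne_zero _ hσ.ne'
  have hXlaw : ∀ k, P.map (X k) = gaussianReal (m k) (σ ^ 2) := by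
    rintro (i | p)
    · simpa [hm] using hlawGS i
    · simpa [hm] using hlawG p
  have hg := fun k s => fatpim_mgf_of_gaussian_law (hXmeas k) hv (hXlaw k) s
  have hZmeas : ∀ k, Measurable (Zf k) := fun k => (hXmeas k).const_mul _
  have hindepZ : iIndepFun Zf P :=
    hindep.comp (fun k x => c k * x) (fun k => measurable_id.const_mul _)
  have hintZ : ∀ (s : ℝ) k, Integrable (fun ω => Real.exp (s * Zf k ω)) P := by
    intro s k
    have := (hg k (s * c k)).1
    simpa [hZf, mul_assoc] using this
  have hmgfZ : ∀ k (s : ℝ), mgf (Zf k) P s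
      = Real.exp (s * c k * m k + (σ : ℝ) ^ 2 * (s * c k) ^ 2 / 2) := by
    intro k s
    have h2 := (hg k (s * c k)).2
    have h3 : mgf (Zf k) P s = mgf (X k) P (s * c k) := by
      simp only [mgf, hZf]
      congr 1
      funext ω
      rw [mul_assoc]
    rw [h3, h2]
    push_cast
    ring_nf
  have hintY : ∀ (s : ℝ),
      Integrable (fun ω => Real.exp (s * (∑ k, Zf k) ω)) P := fun s =>
    hindepZ.integrable_exp_mul_sum hZmeas (fun k _ => hintZ s k)
  have hM : ∑ k, c k * m k = 0 := by
    rw [Fintype.sum_sum_type]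
    simp only [hc, hm, Sum.elim_inl, Sum.elim_inr]
    rw [Fintype.sum_prod_type]
    simp only [neg_mul, ← Finset.mul_sum]
    rw [Finset.sum_neg_distrib, neg_add_cancel]
  have hmgfY : ∀ (s : ℝ), mgf (∑ k, Zf k) P s
      = Real.exp ((σ : ℝ) ^ 2 * s ^ 2 / 2 * ∑ k, c k ^ 2) := by
    intro s
    rw [hindepZ.mgf_sum hZmeas]
    rw [Finset.prod_congr rfl fun k _ => hmgfZ k s, ← Real.exp_sum]
    congr 1
    have h4 : ∀ k, s * c k * m k + (σ : ℝ) ^ 2 * (s * c k) ^ 2 / 2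
        = s * (c k * m k) + (σ : ℝ) ^ 2 * s ^ 2 / 2 * c k ^ 2 := fun k => by ring
    simp_rw [h4]
    rw [Finset.sum_add_distrib, ← Finset.mul_sum, ← Finset.mul_sum, hM, mul_zero, zero_add]
  have hA2 : ∀ i, A i ^ 2 ≤ 1 := fun i => by nlinarith [(hA i).1, (hA i).2]
  have hn1 : (1 : ℝ) ≤ n := by exact_mod_cast hn
  have hS : ∑ k, c k ^ 2 ≤ 2 * (n : ℝ) ^ 2 := by
    rw [Fintype.sum_sum_type]
    simp only [hc, Sum.elim_inl, Sum.elim_inr, neg_sq]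
    rw [Fintype.sum_prod_type]
    have h1 : ∑ i : Fin n, A i ^ 2 ≤ (n : ℝ) := by
      calc ∑ i : Fin n, A i ^ 2 ≤ ∑ _i : Fin n, (1 : ℝ) :=
            Finset.sum_le_sum fun i _ => hA2 i
        _ = n := by simp
    have h2 : ∑ i : Fin n, ∑ _j : Fin n, A i ^ 2 = (n : ℝ) * ∑ i : Fin n, A i ^ 2 := by
      simp [Finset.mul_sum, mul_comm]
    rw [h2]
    nlinarith
  have hσR : (0 : ℝ) < σ := hσ
  set t : ℝ := δ / (2 * (n : ℝ) ^ 2 * (σ : ℝ) ^ 2) with ht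
  have ht0 : 0 < t := div_pos hδ (by positivity)
  have hSnn : (0:ℝ) ≤ ∑ k, c k ^ 2 := Finset.sum_nonneg fun k _ => sq_nonneg _
  have hexpkey : Real.exp (-t * δ)
      * Real.exp ((σ : ℝ) ^ 2 * t ^ 2 / 2 * ∑ k, c k ^ 2) ≤ Real.exp (-(36 : ℝ)) := by
    rw [← Real.exp_add, Real.exp_le_exp]
    have h1 : (σ : ℝ) ^ 2 * t ^ 2 / 2 * (∑ k, c k ^ 2)
        ≤ (σ : ℝ) ^ 2 * t ^ 2 / 2 * (2 * (n : ℝ) ^ 2) :=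
      mul_le_mul_of_nonneg_left hS (by positivity)
    have h2 : -t * δ + (σ : ℝ) ^ 2 * t ^ 2 / 2 * (2 * (n : ℝ) ^ 2)
        = -(δ ^ 2 / (4 * (n : ℝ) ^ 2 * (σ : ℝ) ^ 2)) := by
      rw [ht]
      field_simp
      ring
    have h3 : 144 * (n : ℝ) ^ 2 * (σ : ℝ) ^ 2 ≤ δ ^ 2 := by
      nlinarith [mul_nonneg (sub_nonneg.2 hnσδ)
        (by positivity : (0:ℝ) ≤ δ + 12 * (n : ℝ) * (σ : ℝ))]
    have h4 : -(δ ^ 2 / (4 * (n : ℝ) ^ 2 * (σ : ℝ) ^ 2)) ≤ -(36 : ℝ) := by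
      rw [neg_le_neg_iff, le_div_iff₀ (by positivity)]
      linarith
    linarith
  have hub : (P {ω | δ ≤ (∑ k, Zf k) ω}).toReal ≤ Real.exp (-(36 : ℝ)) := by
    have h := measure_ge_le_exp_mul_mgf (μ := P) (X := ∑ k, Zf k) δ ht0.le (hintY t)
    rw [hmgfY t] at h
    exact h.trans hexpkey
  have hlb : (P {ω | (∑ k, Zf k) ω ≤ -δ}).toReal ≤ Real.exp (-(36 : ℝ)) := by
    have h := measure_le_le_exp_mul_mgf (μ := P) (X := ∑ k, Zf k) (-δ)
      (neg_nonpos.mpr ht0.le) (hintY (-t))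
    rw [hmgfY (-t)] at h
    have he : -(-t) * -δ = -t * δ := by ring
    rw [he, neg_sq] at h
    exact h.trans hexpkey
  have h236 : 2 * Real.exp (-(36 : ℝ)) ≤ 4 / 10 ^ 9 := by
    have hp : (2 : ℝ) ^ 36 ≤ Real.exp 36 := by
      calc (2 : ℝ) ^ 36 ≤ Real.exp 1 ^ 36 :=
            pow_le_pow_left₀ (by norm_num) (by nlinarith [Real.add_one_le_exp (1 : ℝ)]) 36
        _ = Real.exp 36 := by
            rw [← Real.exp_nat_mul]
            norm_num
    have h5 : (5 * 10 ^ 8 : ℝ) ≤ Real.exp 36 := le_trans (by norm_num) hp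
    have h6 : (Real.exp 36)⁻¹ ≤ ((5 : ℝ) * 10 ^ 8)⁻¹ :=
      inv_anti₀ (by norm_num) h5
    rw [Real.exp_neg]
    calc 2 * (Real.exp 36)⁻¹ ≤ 2 * ((5 : ℝ) * 10 ^ 8)⁻¹ :=
          mul_le_mul_of_nonneg_left h6 (by norm_num)
      _ = 4 / 10 ^ 9 := by norm_num
  have hYeq : ∀ ω, (∑ j, ∑ i, A i * X (.inr (i, j)) ω) - ∑ i, A i * X (.inl i) ω
      = (∑ k, Zf k) ω := by
    intro ω
    rw [Finset.sum_apply, Fintype.sum_sum_type]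
    simp only [hZf, hc, Sum.elim_inl, Sum.elim_inr]
    rw [Fintype.sum_prod_type, Finset.sum_comm]
    simp only [neg_mul]
    rw [Finset.sum_neg_distrib]
    ring
  have hset : {ω | |(∑ j, ∑ i, A i * X (.inr (i, j)) ω) - ∑ i, A i * X (.inl i) ω| ≤ δ}
      = {ω | |(∑ k, Zf k) ω| ≤ δ} := by
    ext ω
    simp only [Set.mem_setOf_eq, hYeq ω]
  rw [hset]
  have hYmeas : Measurable (∑ k, Zf k) := by
    have h : (∑ k, Zf k) = fun ω => ∑ k, Zf k ω := by
      funext ω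
      rw [Finset.sum_apply]
    rw [h]
    exact Finset.measurable_sum _ fun k _ => hZmeas k
  have hE : MeasurableSet {ω | |(∑ k, Zf k) ω| ≤ δ} :=
    measurableSet_le hYmeas.abs measurable_const
  have hcompl : P {ω | |(∑ k, Zf k) ω| ≤ δ}ᶜ ≤ ENNReal.ofReal (4 / 10 ^ 9) := by
    have hsub : {ω | |(∑ k, Zf k) ω| ≤ δ}ᶜ
        ⊆ {ω | δ ≤ (∑ k, Zf k) ω} ∪ {ω | (∑ k, Zf k) ω ≤ -δ} := by
      intro ω hω
      simp only [Set.mem_compl_iff, Set.mem_setOf_eq, not_le] at hω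
      rcases abs_cases ((∑ k, Zf k) ω) with ⟨h, _⟩ | ⟨h, _⟩
      · left
        simp only [Set.mem_setOf_eq]
        linarith
      · right
        simp only [Set.mem_setOf_eq]
        linarith
    calc P {ω | |(∑ k, Zf k) ω| ≤ δ}ᶜ
        ≤ P {ω | δ ≤ (∑ k, Zf k) ω} + P {ω | (∑ k, Zf k) ω ≤ -δ} :=
          le_trans (measure_mono hsub) (measure_union_le _ _)
      _ ≤ ENNReal.ofReal (Real.exp (-(36:ℝ))) + ENNReal.ofReal (Real.exp (-(36:ℝ))) := by
          refine add_le_add ?_ ?_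
          · rw [← ENNReal.ofReal_toReal (measure_ne_top P _)]
            exact ENNReal.ofReal_le_ofReal hub
          · rw [← ENNReal.ofReal_toReal (measure_ne_top P _)]
            exact ENNReal.ofReal_le_ofReal hlb
      _ = ENNReal.ofReal (2 * Real.exp (-(36:ℝ))) := by
          rw [← ENNReal.ofReal_add (Real.exp_pos _).le (Real.exp_pos _).le, two_mul]
      _ ≤ ENNReal.ofReal (4 / 10 ^ 9) := ENNReal.ofReal_le_ofReal h236
  calc ENNReal.ofReal (1 - 4 / 10 ^ 9)
      = 1 - ENNReal.ofReal (4 / 10 ^ 9) := by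
        rw [ENNReal.ofReal_sub _ (by norm_num), ENNReal.ofReal_one]
    _ ≤ 1 - P {ω | |(∑ k, Zf k) ω| ≤ δ}ᶜ := tsub_le_tsub_left hcompl 1
    _ ≤ P {ω | |(∑ k, Zf k) ω| ≤ δ} := by
        rw [tsub_le_iff_right]
        exact (measure_univ (μ := P)).symm.le.trans (measure_add_measure_compl hE).symm.le
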